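/- arXiv:1110.2225 — 3 statements merged into one kernel-verified Lean document; each statement's English description precedes it below -/
import Mathlib

section
/- The formal power series G(x) = Σ_{n≥0} av_{t51}(n) x^n (with integer or rational coefficients) satisfies the functional equation x·G(x)^2 − G(x) + x = 0. -/
inductive TTree : Type
  | L : TTree
  | N : TTree → TTree → TTree → TTree

namespace TTree

/-- `occursAtRoot t T` : the pattern `t` occurs at the root of `T`. -/
def occursAtRoot : TTree → TTree → Prop
  | .L, _ => True
  | .N _ _ _, .L => False
  | .N p q r, .N a b c => occursAtRoot p a ∧ occursAtRoot q b ∧ occursAtRoot r c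

/-- `contains t T` : the pattern `t` occurs at some vertex of `T`. -/
def contains (t : TTree) : TTree → Prop
  | .L => occursAtRoot t .L
  | .N a b c => occursAtRoot t (.N a b c) ∨ contains t a ∨ contains t b ∨ contains t c

/-- `T.avoids t` : the tree `T` avoids the pattern `t`. -/
def avoids (T t : TTree) : Prop := ¬ contains t T

/-- the number of leaves of a ternary tree -/
def leaves : TTree → ℕ
  | .L => 1
  | .N a b c => leaves a + leaves b + leaves c

end TTree

/-- `av t n` : the number of `n`-leaf ternary trees avoiding the pattern `t` -/
noncomputable def av (t : TTree) (n : ℕ) : ℕ :=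
  Set.ncard {T : TTree | T.leaves = n ∧ T.avoids t}

/-- the 5-leaf pattern `t51 = N(N(L,L,L),L,L)` -/
def t51 : TTree := .N (.N .L .L .L) .L .L

-- Auxiliary material

deriving instance DecidableEq for TTree

namespace TTree

lemma leaves_pos (T : TTree) : 1 ≤ T.leaves := by
  induction T with
  | L => simp [leaves]
  | N a b c iha ihb ihc => simp [leaves]; omega

lemma avoids_L : TTree.L.avoids t51 := by
  simp [avoids, contains, occursAtRoot, t51]

lemma avoids_N (a b c : TTree) :
    (TTree.N a b c).avoids t51 ↔ a = .L ∧ b.avoids t51 ∧ c.avoids t51 := by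
  cases a with
  | L =>
    simp [avoids, contains, occursAtRoot, t51]
  | N x y z =>
    simp [avoids, contains, occursAtRoot, t51]

end TTree

def avs : ℕ → Finset TTree
  | 0 => ∅
  | 1 => {.L}
  | (n+2) => (Finset.HasAntidiagonal.antidiagonal (n+1)).attach.biUnion
      fun p => ((avs p.1.1) ×ˢ (avs p.1.2)).image fun bc => .N .L bc.1 bc.2
  decreasing_by
    · have := Finset.HasAntidiagonal.mem_antidiagonal.mp p.2; omega
    · have := Finset.HasAntidiagonal.mem_antidiagonal.mp p.2; omega

lemma mem_avs : ∀ n (T : TTree), T ∈ avs n ↔ T.leaves = n ∧ T.avoids t51 := by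
  intro n
  induction n using Nat.strong_induction_on with
  | _ n ih =>
    match n with
    | 0 =>
      intro T
      simp only [avs, Finset.notMem_empty, false_iff, not_and]
      intro h
      have := T.leaves_pos
      omega
    | 1 =>
      intro T
      cases T with
      | L => simpa [avs, TTree.leaves] using TTree.avoids_L
      | N a b c =>
        have ha := a.leaves_pos; have hb := b.leaves_pos; have hc := c.leaves_pos
        simp only [avs, Finset.mem_singleton, TTree.leaves]
        constructor
        · intro h; exact absurd h (by simp)
        · intro ⟨h, _⟩; omega
    | (m+2) =>
      intro T
      simp only [avs, Finset.mem_biUnion, Finset.mem_attach, true_and, Finset.mem_image,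
        Finset.mem_product, Subtype.exists, Finset.HasAntidiagonal.mem_antidiagonal, Prod.exists]
      constructor
      · rintro ⟨i, j, hij, b, c, ⟨hb, hc⟩, rfl⟩
        have hb' := (ih i (by omega) b).mp hb
        have hc' := (ih j (by omega) c).mp hc
        refine ⟨by simp [TTree.leaves, hb'.1, hc'.1]; omega, ?_⟩
        rw [TTree.avoids_N]
        exact ⟨rfl, hb'.2, hc'.2⟩
      · rintro ⟨hl, hav⟩
        cases T with
        | L => simp [TTree.leaves] at hl
        | N a b c =>
          rw [TTree.avoids_N] at hav
          obtain ⟨rfl, hb, hc⟩ := hav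
          have hb1 := b.leaves_pos; have hc1 := c.leaves_pos
          simp only [TTree.leaves] at hl
          refine ⟨b.leaves, c.leaves, by omega, b, c, ⟨?_, ?_⟩, rfl⟩
          · exact (ih b.leaves (by omega) b).mpr ⟨rfl, hb⟩
          · exact (ih c.leaves (by omega) c).mpr ⟨rfl, hc⟩

lemma av_eq_card (n : ℕ) : av t51 n = (avs n).card := by
  have : {T : TTree | T.leaves = n ∧ T.avoids t51} = ↑(avs n) := by
    ext T; simp [mem_avs]
  rw [av, this, Set.ncard_coe_finset]

lemma card_avs_succ_succ (n : ℕ) :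
    (avs (n+2)).card = ∑ p ∈ Finset.HasAntidiagonal.antidiagonal (n+1), (avs p.1).card * (avs p.2).card := by
  rw [avs]
  rw [Finset.card_biUnion]
  · rw [← Finset.sum_attach (Finset.HasAntidiagonal.antidiagonal (n+1))
      (fun p => (avs p.1).card * (avs p.2).card)]
    refine Finset.sum_congr rfl fun p _ => ?_
    rw [Finset.card_image_of_injective _ (fun bc bc' h => by
      cases bc; cases bc'; simpa using h), Finset.card_product]
  · intro p _ q _ hpq
    simp only [Finset.disjoint_left, Finset.mem_image, Finset.mem_product, Prod.exists]
    rintro T ⟨b, c, ⟨hb, hc⟩, rfl⟩ ⟨b', c', ⟨hb', hc'⟩, hT⟩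
    injection hT with h0 hbe hce
    rw [hbe] at hb'
    rw [hce] at hc'
    have h1 := (mem_avs _ b).mp hb
    have h2 := (mem_avs _ c).mp hc
    have h1' := (mem_avs _ b).mp hb'
    have h2' := (mem_avs _ c).mp hc'
    exact hpq (Subtype.ext (Prod.ext_iff.mpr ⟨by omega, by omega⟩))

open PowerSeries in
/-- The generating function `G(x) = Σ av_{t51}(n) xⁿ` satisfies
`x·G(x)² − G(x) + x = 0`. -/
theorem av_t51_gf :
    let G : PowerSeries ℚ := PowerSeries.mk fun n => (av t51 n : ℚ)
    X * G ^ 2 - G + X = 0 := by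
  intro G
  have hav0 : av t51 0 = 0 := by rw [av_eq_card]; simp [avs]
  have hav1 : av t51 1 = 1 := by rw [av_eq_card]; simp [avs]
  have hGc : ∀ k, (coeff k) G = (av t51 k : ℚ) := fun k => coeff_mk k _
  have hG2 : ∀ m, (coeff m) (G ^ 2)
      = ∑ p ∈ Finset.HasAntidiagonal.antidiagonal m, (av t51 p.1 : ℚ) * av t51 p.2 := by
    intro m
    rw [sq, coeff_mul]
    exact Finset.sum_congr rfl fun p _ => by rw [hGc, hGc]
  ext n
  rw [map_add, map_sub, map_zero]
  match n with
  | 0 =>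
    rw [coeff_mul]
    simp [hGc, hav0, PowerSeries.coeff_X]
  | 1 =>
    rw [coeff_succ_X_mul, hG2, hGc]
    simp [hav0, hav1, PowerSeries.coeff_X]
  | (m+2) =>
    rw [coeff_succ_X_mul, hG2, hGc, av_eq_card, card_avs_succ_succ]
    have hx : ((coeff (m+2)) X : ℚ) = 0 := by
      rw [PowerSeries.coeff_X]; simp
    rw [hx]
    push_cast [av_eq_card]
    ring
end

section
/- For every n ≥ 0, the number of (2n+1)-leaf ternary trees avoiding t72 = N(N(L,L,L),L,N(L,L,L)) equals Σ_B 2^{r(B)}, where the sum is over all (non-strict) binary trees B with exactly n vertices and r(B) is the number of vertices of B having a nonempty right subtree. (This is the count of n-vertex binary trees with each right edge colored in one of two colors, which equals the n-th little Schröder number.) -/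
/-- the 7-leaf pattern `t72 = N(N(L,L,L),L,N(L,L,L))` -/
def t72 : TTree := .N (.N .L .L .L) .L (.N .L .L .L)

/-- a (non-strict) binary tree: either empty, or a vertex with a
(possibly empty) left subtree and a (possibly empty) right subtree -/
inductive BTree : Type
  | nil : BTree
  | node : BTree → BTree → BTree

namespace BTree

/-- the number of vertices of a (non-strict) binary tree -/
def vertices : BTree → ℕ
  | .nil => 0
  | .node l r => 1 + vertices l + vertices r

/-- the number of vertices whose right subtree is nonempty
(equivalently, the number of right edges) -/
def rcount : BTree → ℕ
  | .nil => 0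
  | .node l r => (match r with | .nil => 0 | .node _ _ => 1) + rcount l + rcount r

end BTree

---- auxiliaries ----

deriving instance DecidableEq for TTree
deriving instance DecidableEq for BTree

namespace TTree

def isN : TTree → Prop
  | .L => False
  | .N _ _ _ => True

def inodes : TTree → ℕ
  | .L => 0
  | .N a b c => inodes a + inodes b + inodes c + 1

def good : TTree → Prop
  | .L => True
  | .N a b c => good a ∧ good b ∧ good c ∧ ¬(a.isN ∧ c.isN)

lemma occursAtRoot_NLLL (x : TTree) : occursAtRoot (.N .L .L .L) x ↔ x.isN := by
  cases x <;> simp [occursAtRoot, isN]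

lemma leaves_eq (T : TTree) : T.leaves = 2 * T.inodes + 1 := by
  induction T with
  | L => rfl
  | N a b c ha hb hc => simp only [leaves, inodes, ha, hb, hc]; ring

lemma contains_iff (T : TTree) : contains t72 T ↔ ¬ good T := by
  induction T with
  | L => simp [contains, occursAtRoot, t72, good]
  | N a b c ha hb hc =>
    rw [show contains t72 (N a b c) ↔ _ from Iff.rfl]
    simp only [contains, t72, occursAtRoot, occursAtRoot_NLLL, good, ha, hb, hc, true_and]
    tauto

lemma avoids_iff (T : TTree) : T.avoids t72 ↔ good T := by
  rw [avoids, contains_iff]; tauto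

end TTree


def A : ℕ → ℕ
  | 0 => 1
  | n+1 =>
      (∑ j ∈ (Finset.range (n+1)).attach, A j * A (n - j)) +
      (∑ i ∈ (Finset.range (n+1)).attach, if (i : ℕ) = 0 then 0 else A i * A (n - i))
decreasing_by
  all_goals
    rename { x // x ∈ Finset.range (n+1) } => k
    have := Finset.mem_range.mp k.2
    omega

def BF : ℕ → Finset BTree
  | 0 => {BTree.nil}
  | n+1 => (Finset.range (n+1)).attach.biUnion fun i =>
      ((BF i) ×ˢ (BF (n - i))).image fun p => BTree.node p.1 p.2
decreasing_by
  all_goals have := Finset.mem_range.mp i.2; omega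

lemma A_zero : A 0 = 1 := by simp [A]

lemma A_succ (n : ℕ) : A (n+1) =
    (∑ j ∈ Finset.range (n+1), A j * A (n - j)) +
    (∑ i ∈ Finset.range (n+1), if i = 0 then 0 else A i * A (n - i)) := by
  rw [A, Finset.sum_attach _ (fun j => A j * A (n - j)),
    Finset.sum_attach _ (fun i => if i = 0 then 0 else A i * A (n - i))]

lemma mem_BF : ∀ (B : BTree) (n : ℕ), B ∈ BF n ↔ B.vertices = n := by
  intro B
  induction B with
  | nil =>
    intro n
    cases n with
    | zero => simp [BF, BTree.vertices]
    | succ n => simp [BF, BTree.vertices]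
  | node l r hl hr =>
    intro n
    cases n with
    | zero => simp [BF, BTree.vertices]
    | succ n =>
      simp only [BF, Finset.mem_biUnion, Finset.mem_attach, true_and, Subtype.exists,
        Finset.mem_image, Finset.mem_product, Finset.mem_range, Prod.exists]
      constructor
      · rintro ⟨i, hi, a, b, ⟨ha, hb⟩, h⟩
        cases h
        rw [hl] at ha; rw [hr] at hb
        simp [BTree.vertices]; omega
      · intro h
        simp [BTree.vertices] at h
        refine ⟨l.vertices, by omega, l, r, ⟨(hl _).mpr rfl, (hr _).mpr ?_⟩, rfl⟩
        omega

lemma rcount_node (l r : BTree) :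
    (BTree.node l r).rcount = (if r = BTree.nil then 0 else 1) + l.rcount + r.rcount := by
  cases r <;> simp [BTree.rcount]

lemma S_eq (n : ℕ) : (∑ B ∈ BF n, 2 ^ B.rcount) = A n := by
  induction n using Nat.strong_induction_on with
  | _ n ih =>
    match n with
    | 0 => simp [BF, A, BTree.rcount]
    | n+1 =>
      have hdisj : Set.PairwiseDisjoint (((Finset.range (n+1)).attach : Finset _) : Set _)
          (fun i : {x // x ∈ Finset.range (n+1)} =>
            ((BF i) ×ˢ (BF (n - i))).image fun p => BTree.node p.1 p.2) := by
        intro i _ j _ hij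
        simp only [Function.onFun, Finset.disjoint_left]
        rintro B hB hB'
        simp only [Finset.mem_image, Finset.mem_product, Prod.exists, BTree.node.injEq] at hB hB'
        obtain ⟨a, b, ⟨ha, -⟩, rfl⟩ := hB
        obtain ⟨a', b', ⟨ha', -⟩, h1⟩ := hB'
        have e1 : a' = a := by
          have := congrArg (fun t => match t with | BTree.node x _ => x | BTree.nil => BTree.nil) h1
          simpa using this
        have h2 := (mem_BF a' _).mp ha'
        rw [e1] at h2
        exact hij (Subtype.ext (((mem_BF a _).mp ha).symm.trans h2))
      have hinj : ∀ i, Set.InjOn (fun p : BTree × BTree => BTree.node p.1 p.2)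
          ((BF i ×ˢ BF (n - i)) : Finset _) := by
        rintro i ⟨a, b⟩ - ⟨c, d⟩ - h
        simp only [BTree.node.injEq] at h
        simp [Prod.ext_iff, h.1, h.2]
      have hW : ∀ j, j ≤ n → (∑ r ∈ BF j, 2 ^ r.rcount * (if r = BTree.nil then 1 else 2))
          = A j + (if j = 0 then 0 else A j) := by
        intro j hj
        match j with
        | 0 => simp [BF, A, BTree.rcount]
        | j+1 =>
          have : ∀ r ∈ BF (j+1), 2 ^ r.rcount * (if r = BTree.nil then 1 else 2)
              = 2 ^ r.rcount * 2 := by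
            intro r hr
            have : r ≠ BTree.nil := by
              intro h; subst h
              have := (mem_BF _ _).mp hr
              simp [BTree.vertices] at this
            simp [this]
          rw [Finset.sum_congr rfl this, ← Finset.sum_mul, ih (j+1) (by omega)]
          simp; ring
      rw [show BF (n+1) = (Finset.range (n+1)).attach.biUnion fun i =>
          ((BF i) ×ˢ (BF (n - i))).image fun p => BTree.node p.1 p.2 from by rw [BF],
        Finset.sum_biUnion hdisj]
      have step : ∀ i : {x // x ∈ Finset.range (n+1)},
          (∑ B ∈ ((BF i) ×ˢ (BF (n - i))).image (fun p => BTree.node p.1 p.2), 2 ^ B.rcount)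
          = A i * (A (n - i) + (if (n : ℕ) - i = 0 then 0 else A (n - i))) := by
        intro i
        rw [Finset.sum_image (hinj i), Finset.sum_product]
        have : ∀ l ∈ BF (i : ℕ), (∑ r ∈ BF (n - i), 2 ^ (BTree.node l r).rcount)
            = 2 ^ l.rcount * (A (n - i) + (if (n : ℕ) - i = 0 then 0 else A (n - i))) := by
          intro l _
          rw [← hW (n - i) (by omega), Finset.mul_sum]
          refine Finset.sum_congr rfl fun r _ => ?_
          rw [rcount_node]
          cases r <;> simp [pow_add, pow_succ] <;> ring
        rw [Finset.sum_congr rfl this, ← Finset.sum_mul,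
          ih i (Finset.mem_range.mp i.2)]
      rw [Finset.sum_congr rfl (fun i _ => step i),
        Finset.sum_attach _ (fun i => A i * (A (n - i) + (if n - i = 0 then 0 else A (n - i)))),
        A_succ]
      have refl2 : (∑ i ∈ Finset.range (n+1), if i = 0 then 0 else A i * A (n - i))
          = ∑ i ∈ Finset.range (n+1), (if n - i = 0 then 0 else A i * A (n - i)) := by
        rw [← Finset.sum_range_reflect (fun i => if i = 0 then (0:ℕ) else A i * A (n - i)) (n+1)]
        refine Finset.sum_congr rfl fun i hi => ?_
        have hi' := Finset.mem_range.mp hi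
        have h1 : n + 1 - 1 - i = n - i := by omega
        rw [h1]
        by_cases h : n - i = 0
        · simp [h]
        · have : n - (n - i) = i := by omega
          simp [h, this, mul_comm]
      rw [refl2, ← Finset.sum_add_distrib]
      refine Finset.sum_congr rfl fun i hi => ?_
      by_cases h : n - i = 0 <;> simp [h, mul_add]

def TF : ℕ → Finset TTree
  | 0 => {TTree.L}
  | n+1 =>
    ((Finset.range (n+1)).attach.biUnion fun j =>
      ((TF j) ×ˢ (TF (n - j))).image fun p => TTree.N TTree.L p.1 p.2)
    ∪
    ((Finset.Ico 1 (n+1)).attach.biUnion fun i =>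
      ((TF i) ×ˢ (TF (n - i))).image fun p => TTree.N p.1 p.2 TTree.L)
decreasing_by
  · rename {x // x ∈ Finset.range (n+1)} => k
    have := Finset.mem_range.mp k.2; omega
  · rename {x // x ∈ Finset.range (n+1)} => k
    have := Finset.mem_range.mp k.2; omega
  · rename {x // x ∈ Finset.Ico 1 (n+1)} => k
    have := Finset.mem_Ico.mp k.2; omega
  · rename {x // x ∈ Finset.Ico 1 (n+1)} => k
    have := Finset.mem_Ico.mp k.2; omega

lemma mem_TF : ∀ (T : TTree) (n : ℕ), T ∈ TF n ↔ (T.inodes = n ∧ T.good) := by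
  intro T
  induction T with
  | L =>
    intro n
    cases n with
    | zero => simp [TF, TTree.inodes, TTree.good]
    | succ n =>
      have hmem : (TTree.L : TTree) ∈ TF (n+1) ↔
          ((∃ j < n+1, ∃ x y, (x ∈ TF j ∧ y ∈ TF (n - j)) ∧ TTree.N TTree.L x y = TTree.L)
          ∨ (∃ i, (1 ≤ i ∧ i < n+1) ∧ ∃ x y, (x ∈ TF i ∧ y ∈ TF (n - i)) ∧
              TTree.N x y TTree.L = TTree.L)) := by
        rw [show TF (n+1) = _ from by rw [TF]]
        simp only [Finset.mem_union, Finset.mem_biUnion, Finset.mem_attach, true_and,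
          Subtype.exists, Finset.mem_image, Finset.mem_product, Prod.exists, Finset.mem_range,
          Finset.mem_Ico, exists_prop]
      rw [hmem]
      constructor
      · rintro (⟨j, hj, x, y, -, e⟩ | ⟨i, hi, x, y, -, e⟩) <;> exact absurd e (by simp)
      · rintro ⟨h, -⟩; exact absurd h (by simp [TTree.inodes])
  | N a b c ha hb hc =>
    intro n
    cases n with
    | zero =>
      simp only [TF, Finset.mem_singleton, TTree.inodes]
      constructor
      · rintro h; exact absurd h (by simp)
      · rintro ⟨h, -⟩; omega
    | succ n =>
      have hmem : (TTree.N a b c) ∈ TF (n+1) ↔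
          ((∃ j < n+1, ∃ x y, (x ∈ TF j ∧ y ∈ TF (n - j)) ∧ TTree.N TTree.L x y = TTree.N a b c)
          ∨ (∃ i, (1 ≤ i ∧ i < n+1) ∧ ∃ x y, (x ∈ TF i ∧ y ∈ TF (n - i)) ∧
              TTree.N x y TTree.L = TTree.N a b c)) := by
        rw [show TF (n+1) = _ from by rw [TF]]
        simp only [Finset.mem_union, Finset.mem_biUnion, Finset.mem_attach, true_and,
          Subtype.exists, Finset.mem_image, Finset.mem_product, Prod.exists, Finset.mem_range,
          Finset.mem_Ico, exists_prop]
      rw [hmem]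
      constructor
      · rintro (⟨j, hj, x, y, ⟨hx, hy⟩, e⟩ | ⟨i, hi, x, y, ⟨hx, hy⟩, e⟩)
        · injection e with e1 e2 e3
          subst e1; subst e2; subst e3
          obtain ⟨hb1, hb2⟩ := (hb j).mp hx
          obtain ⟨hc1, hc2⟩ := (hc _).mp hy
          refine ⟨?_, trivial, hb2, hc2, by simp [TTree.isN]⟩
          simp [TTree.inodes]; omega
        · injection e with e1 e2 e3
          subst e1; subst e2; subst e3
          obtain ⟨ha1, ha2⟩ := (ha i).mp hx
          obtain ⟨hb1, hb2⟩ := (hb _).mp hy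
          refine ⟨?_, ha2, hb2, trivial, by simp [TTree.isN]⟩
          simp [TTree.inodes]; omega
      · rintro ⟨hsum, ga, gb, gc, hnot⟩
        simp only [TTree.inodes] at hsum
        cases a with
        | L =>
          left
          refine ⟨b.inodes, by simp [TTree.inodes] at hsum; omega, b, c,
            ⟨(hb _).mpr ⟨rfl, gb⟩, (hc _).mpr ⟨?_, gc⟩⟩, rfl⟩
          simp [TTree.inodes] at hsum; omega
        | N x y z =>
          right
          cases c with
          | N u v w => exact absurd ⟨trivial, trivial⟩ hnot
          | L =>
            refine ⟨(TTree.N x y z).inodes, ⟨?_, ?_⟩, TTree.N x y z, b,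
              ⟨(ha _).mpr ⟨rfl, ga⟩, (hb _).mpr ⟨?_, gb⟩⟩, rfl⟩
            · simp [TTree.inodes]
            · simp [TTree.inodes] at hsum ⊢; omega
            · simp [TTree.inodes] at hsum ⊢; omega

lemma card_TF (n : ℕ) : (TF n).card = A n := by
  induction n using Nat.strong_induction_on with
  | _ n ih =>
    match n with
    | 0 => simp [TF, A_zero]
    | n+1 =>
      have inodes_of_mem : ∀ {T : TTree} {m : ℕ}, T ∈ TF m → T.inodes = m :=
        fun h => ((mem_TF _ _).mp h).1
      -- disjointness of the two big unions
      have hdisj : Disjoint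
          ((Finset.range (n+1)).attach.biUnion fun j =>
            ((TF j) ×ˢ (TF (n - j))).image fun p => TTree.N TTree.L p.1 p.2)
          ((Finset.Ico 1 (n+1)).attach.biUnion fun i =>
            ((TF i) ×ˢ (TF (n - i))).image fun p => TTree.N p.1 p.2 TTree.L) := by
        simp only [Finset.disjoint_left, Finset.mem_biUnion, Finset.mem_attach, true_and,
          Subtype.exists, Finset.mem_image, Finset.mem_product, Prod.exists, Finset.mem_range,
          Finset.mem_Ico, exists_prop]
        rintro T ⟨j, hj, x, y, -, rfl⟩ ⟨i, hi, x', y', ⟨hx', -⟩, h⟩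
        have e1 : x' = TTree.L := by
          have := congrArg (fun t => match t with | TTree.N a _ _ => a | TTree.L => TTree.L) h
          simpa using this
        rw [e1] at hx'
        have := inodes_of_mem hx'
        simp [TTree.inodes] at this
        omega
      have hdisjL : ∀ x ∈ (Finset.range (n+1)).attach, ∀ y ∈ (Finset.range (n+1)).attach,
          x ≠ y → Disjoint
            (((TF x) ×ˢ (TF (n - x))).image fun p => TTree.N TTree.L p.1 p.2)
            (((TF y) ×ˢ (TF (n - y))).image fun p => TTree.N TTree.L p.1 p.2) := by
        rintro x - y - hxy
        simp only [Finset.disjoint_left, Finset.mem_image, Finset.mem_product, Prod.exists]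
        rintro T ⟨a, b, ⟨ha, -⟩, rfl⟩ ⟨a', b', ⟨ha', -⟩, h⟩
        have e1 : a' = a := by
          have := congrArg (fun t => match t with | TTree.N _ m _ => m | TTree.L => TTree.L) h
          simpa using this
        rw [e1] at ha'
        exact hxy (Subtype.ext ((inodes_of_mem ha).symm.trans (inodes_of_mem ha')))
      have hdisjR : ∀ x ∈ (Finset.Ico 1 (n+1)).attach, ∀ y ∈ (Finset.Ico 1 (n+1)).attach,
          x ≠ y → Disjoint
            (((TF x) ×ˢ (TF (n - x))).image fun p => TTree.N p.1 p.2 TTree.L)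
            (((TF y) ×ˢ (TF (n - y))).image fun p => TTree.N p.1 p.2 TTree.L) := by
        rintro x - y - hxy
        simp only [Finset.disjoint_left, Finset.mem_image, Finset.mem_product, Prod.exists]
        rintro T ⟨a, b, ⟨ha, -⟩, rfl⟩ ⟨a', b', ⟨ha', -⟩, h⟩
        have e1 : a' = a := by
          have := congrArg (fun t => match t with | TTree.N m _ _ => m | TTree.L => TTree.L) h
          simpa using this
        rw [e1] at ha'
        exact hxy (Subtype.ext ((inodes_of_mem ha).symm.trans (inodes_of_mem ha')))
      have hinjL : ∀ (j k : ℕ), Set.InjOn (fun p : TTree × TTree => TTree.N TTree.L p.1 p.2)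
          ((TF j ×ˢ TF k) : Finset _) := by
        rintro j k ⟨a, b⟩ - ⟨c, d⟩ - h
        simp only [TTree.N.injEq] at h
        simp [Prod.ext_iff, h.1, h.2]
      have hinjR : ∀ (j k : ℕ), Set.InjOn (fun p : TTree × TTree => TTree.N p.1 p.2 TTree.L)
          ((TF j ×ˢ TF k) : Finset _) := by
        rintro j k ⟨a, b⟩ - ⟨c, d⟩ - h
        simp only [TTree.N.injEq] at h
        simp [Prod.ext_iff, h.1, h.2]
      rw [show TF (n+1) = _ from by rw [TF], Finset.card_union_of_disjoint hdisj,
        Finset.card_biUnion hdisjL, Finset.card_biUnion hdisjR]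
      have e1 : ∀ j : {x // x ∈ Finset.range (n+1)},
          ((((TF j) ×ˢ (TF (n - j))).image fun p => TTree.N TTree.L p.1 p.2)).card
          = A j * A (n - j) := by
        intro j
        rw [Finset.card_image_of_injOn (hinjL _ _), Finset.card_product,
          ih j (Finset.mem_range.mp j.2), ih (n - j) (by omega)]
      have e2 : ∀ i : {x // x ∈ Finset.Ico 1 (n+1)},
          ((((TF i) ×ˢ (TF (n - i))).image fun p => TTree.N p.1 p.2 TTree.L)).card
          = A i * A (n - i) := by
        intro i
        have hi := Finset.mem_Ico.mp i.2
        rw [Finset.card_image_of_injOn (hinjR _ _), Finset.card_product,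
          ih i (by omega), ih (n - i) (by omega)]
      rw [Finset.sum_congr rfl (fun j _ => e1 j), Finset.sum_congr rfl (fun i _ => e2 i),
        Finset.sum_attach (Finset.range (n+1)) (fun j => A j * A (n - j)),
        Finset.sum_attach (Finset.Ico 1 (n+1)) (fun i => A i * A (n - i)), A_succ]
      congr 1
      have hsplit : Finset.range (n+1) = insert 0 (Finset.Ico 1 (n+1)) := by
        ext x; simp; omega
      rw [hsplit, Finset.sum_insert (by simp)]
      rw [if_pos rfl, zero_add]
      apply Finset.sum_congr rfl
      intro i hi
      have := Finset.mem_Ico.mp hi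
      rw [if_neg (by omega)]


/-- The number of `(2n+1)`-leaf ternary trees avoiding `t72` equals
`Σ_B 2^{r(B)}` over all `n`-vertex (non-strict) binary trees `B`. -/
theorem av_t72_schroeder (n : ℕ) :
    av t72 (2 * n + 1) = ∑ᶠ B ∈ {B : BTree | B.vertices = n}, 2 ^ B.rcount := by
  have hset : {T : TTree | T.leaves = 2 * n + 1 ∧ T.avoids t72} = ↑(TF n) := by
    ext T
    simp only [Set.mem_setOf_eq, Finset.mem_coe, mem_TF, TTree.avoids_iff, TTree.leaves_eq]
    constructor
    · rintro ⟨h1, h2⟩; exact ⟨by omega, h2⟩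
    · rintro ⟨h1, h2⟩; exact ⟨by omega, h2⟩
  have hbset : {B : BTree | B.vertices = n} = ↑(BF n) := by
    ext B; simp [mem_BF]
  rw [av, hset, Set.ncard_coe_finset, hbset, finsum_mem_coe_finset, card_TF, S_eq]
end

section
/- For all n ≥ 0, av_{t74}(n) = av_{t75}(n), where t74 = N(N(L,N(L,L,L),L),L,L) and t75 = N(N(L,L,N(L,L,L)),L,L). -/
/-- the 7-leaf pattern `t74 = N(N(L,N(L,L,L),L),L,L)` -/
def t74 : TTree := .N (.N .L (.N .L .L .L) .L) .L .L

/-- the 7-leaf pattern `t75 = N(N(L,L,N(L,L,L)),L,L)` -/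
def t75 : TTree := .N (.N .L .L (.N .L .L .L)) .L .L

namespace TTree

/-- swap the middle and right subtree at every node -/
def swap : TTree → TTree
  | .L => .L
  | .N a b c => .N (swap a) (swap c) (swap b)

lemma swap_swap (T : TTree) : swap (swap T) = T := by
  induction T with
  | L => rfl
  | N a b c ha hb hc => simp [swap, ha, hb, hc]

lemma swap_injective : Function.Injective swap :=
  Function.LeftInverse.injective swap_swap

lemma leaves_swap (T : TTree) : leaves (swap T) = leaves T := by
  induction T with
  | L => rfl
  | N a b c ha hb hc => simp [swap, leaves, ha, hb, hc]; omega

lemma occursAtRoot_swap (t T : TTree) :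
    occursAtRoot (swap t) (swap T) ↔ occursAtRoot t T := by
  induction t generalizing T with
  | L => simp [swap, occursAtRoot]
  | N p q r hp hq hr =>
    cases T with
    | L => simp [swap, occursAtRoot]
    | N a b c =>
      simp only [swap, occursAtRoot, hp, hq, hr]
      tauto

lemma contains_swap (t T : TTree) :
    contains (swap t) (swap T) ↔ contains t T := by
  induction T with
  | L =>
    cases t with
    | L => simp [swap, contains, occursAtRoot]
    | N p q r => simp [swap, contains, occursAtRoot]
  | N a b c ha hb hc =>
    simp only [swap, contains, occursAtRoot_swap, ha, hb, hc]
    rw [show occursAtRoot (swap t) (N (swap a) (swap c) (swap b))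
        = occursAtRoot (swap t) (swap (N a b c)) from rfl, occursAtRoot_swap]
    tauto

lemma avoids_swap (t T : TTree) : (swap T).avoids (swap t) ↔ T.avoids t := by
  unfold avoids
  rw [contains_swap]

end TTree

lemma swap_t74 : TTree.swap t74 = t75 := rfl

/-- The patterns `t74` and `t75` are Wilf equivalent. -/
theorem av_t74_eq_av_t75 (n : ℕ) : av t74 n = av t75 n := by
  have hset : {T : TTree | T.leaves = n ∧ T.avoids t75}
      = TTree.swap '' {T : TTree | T.leaves = n ∧ T.avoids t74} := by
    ext T
    constructor
    · rintro ⟨h1, h2⟩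
      refine ⟨TTree.swap T, ⟨?_, ?_⟩, TTree.swap_swap T⟩
      · rw [TTree.leaves_swap]; exact h1
      · rw [← TTree.avoids_swap, TTree.swap_swap, swap_t74]; exact h2
    · rintro ⟨S, ⟨h1, h2⟩, rfl⟩
      refine ⟨by rw [TTree.leaves_swap]; exact h1, ?_⟩
      rw [← swap_t74, TTree.avoids_swap]; exact h2
  unfold av
  rw [hset, Set.ncard_image_of_injective _ TTree.swap_injective]
end
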